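/- arXiv:2409.13133 — 2 statements merged into one kernel-verified Lean document; each statement's English description precedes it below -/
import Mathlib

section
/- For every d ∈ ℕ, the correlated stochastic quantizers (Q1, Q2) with parameters c, r, ε, d at inputs w, w′ ∈ [c−r, c+r] satisfy P(Q1 = c − r·α(ε)) = 1 − q1 = 1/2 − (w−c)/(2r·α(ε)) and P(Q2 = c − r·α(ε)) = 1 − q2 = 1/2 − (w′−c)/(2r·α(ε)); consequently E[Q1] = w and E[Q2] = w′ (condition C4, unbiasedness). -/
open Real Set Finset

/-- `α(ε) = (e^ε + 1)/(e^ε − 1)`. -/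
noncomputable def alphaFn (ε : ℝ) : ℝ := (Real.exp ε + 1) / (Real.exp ε - 1)

/-- `q(u) = 1/2 + (u − c)/(2rα(ε))`, the probability of the `+` level for input `u`. -/
noncomputable def qOf (c r ε u : ℝ) : ℝ := 1 / 2 + (u - c) / (2 * r * alphaFn ε)

/-- `T1 = ⌊2^d · q1⌋`. -/
noncomputable def T1 (c r ε : ℝ) (d : ℕ) (w : ℝ) : ℤ := ⌊(2 : ℝ) ^ d * qOf c r ε w⌋

/-- `P(U = +1) = 2^d·q1 − ⌊2^d·q1⌋`. -/
noncomputable def pU1 (c r ε : ℝ) (d : ℕ) (w : ℝ) : ℝ :=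
  (2 : ℝ) ^ d * qOf c r ε w - ⌊(2 : ℝ) ^ d * qOf c r ε w⌋

/-- `T2 = ⌊2^d · (1 − q2)⌋`. -/
noncomputable def T2 (c r ε : ℝ) (d : ℕ) (w' : ℝ) : ℤ := ⌊(2 : ℝ) ^ d * (1 - qOf c r ε w')⌋

/-- `P(U' = +1) = 2^d·(1 − q2) − ⌊2^d·(1 − q2)⌋`. -/
noncomputable def pU2 (c r ε : ℝ) (d : ℕ) (w' : ℝ) : ℝ :=
  (2 : ℝ) ^ d * (1 - qOf c r ε w') - ⌊(2 : ℝ) ^ d * (1 - qOf c r ε w')⌋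

/-- Value of the first correlated quantizer `Q1` on outcome `(z, u)`:
`c + rα` if `z < T1`, `c − rα` if `z > T1`, and `c + U·rα` if `z = T1`. -/
noncomputable def Q1val (c r ε : ℝ) (d : ℕ) (w : ℝ) (z : ℕ) (u : Bool) : ℝ :=
  if (z : ℤ) < T1 c r ε d w then c + r * alphaFn ε
  else if T1 c r ε d w < (z : ℤ) then c - r * alphaFn ε
  else c + (if u then 1 else -1) * r * alphaFn ε

/-- Value of the second correlated quantizer `Q2` on outcome `(z, u')`:
`c − rα` if `z < T2`, `c + rα` if `z > T2`, and `c − U'·rα` if `z = T2`. -/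
noncomputable def Q2val (c r ε : ℝ) (d : ℕ) (w' : ℝ) (z : ℕ) (u' : Bool) : ℝ :=
  if (z : ℤ) < T2 c r ε d w' then c - r * alphaFn ε
  else if T2 c r ε d w' < (z : ℤ) then c + r * alphaFn ε
  else c - (if u' then 1 else -1) * r * alphaFn ε

/-- Joint pmf of the outcome `(Z, U, U')`: `Z` uniform on `{0, …, 2^d − 1}` and `Z, U, U'`
mutually independent (`u = true` encodes `U = +1`, `u' = true` encodes `U' = +1`). -/
noncomputable def μjoint (c r ε : ℝ) (d : ℕ) (w w' : ℝ) (z : ℕ) (u u' : Bool) : ℝ :=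
  ((2 : ℝ) ^ d)⁻¹ * (if u then pU1 c r ε d w else 1 - pU1 c r ε d w) *
    (if u' then pU2 c r ε d w' else 1 - pU2 c r ε d w')

lemma sum_tri (N t : ℕ) (ht : t < N) (f : ℕ → ℝ) (A B C : ℝ)
    (hA : ∀ z < t, f z = A) (hB : f t = B) (hC : ∀ z, t < z → f z = C) :
    ∑ z ∈ Finset.range N, f z = t * A + B + ((N - (t + 1) : ℕ) : ℝ) * C := by
  rw [Finset.range_eq_Ico, ← Finset.sum_Ico_consecutive f (Nat.zero_le t) ht.le,
    ← Finset.sum_Ico_consecutive f (Nat.le_succ t) ht]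
  have h1 : ∑ z ∈ Finset.Ico 0 t, f z = t * A := by
    rw [Finset.sum_congr rfl (fun z hz => hA z (Finset.mem_Ico.mp hz).2)]
    simp [mul_comm]
  have h2 : ∑ z ∈ Finset.Ico t (t + 1), f z = B := by
    rw [Nat.Ico_succ_singleton, Finset.sum_singleton, hB]
  have h3 : ∑ z ∈ Finset.Ico (t + 1) N, f z = ((N - (t + 1) : ℕ) : ℝ) * C := by
    rw [Finset.sum_congr rfl (fun z hz => hC z (Finset.mem_Ico.mp hz).1)]
    simp [mul_comm]
  rw [h1, h2, h3]; ring

lemma alphaFn_gt_one {ε : ℝ} (hε : 0 < ε) : 1 < alphaFn ε := by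
  have he : 1 < Real.exp ε := by
    have := Real.exp_lt_exp.mpr hε
    simpa using this
  rw [alphaFn, lt_div_iff₀ (by linarith)]
  linarith

lemma qOf_bounds {c r ε w : ℝ} (hr : 0 < r) (hε : 0 < ε)
    (hw : w ∈ Set.Icc (c - r) (c + r)) : 0 < qOf c r ε w ∧ qOf c r ε w < 1 := by
  have hα := alphaFn_gt_one hε
  have hpos : (0:ℝ) < 2 * r * alphaFn ε := by nlinarith
  obtain ⟨h1, h2⟩ := hw
  constructor
  · rw [qOf]
    have : -(1/2 : ℝ) < (w - c) / (2 * r * alphaFn ε) := by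
      rw [lt_div_iff₀ hpos]; nlinarith
    linarith
  · rw [qOf]
    have : (w - c) / (2 * r * alphaFn ε) < 1/2 := by
      rw [div_lt_iff₀ hpos]; nlinarith
    linarith

/-- for every `d ∈ ℕ`, the correlated stochastic quantizers `(Q1, Q2)` satisfy
`P(Q1 = c − rα(ε)) = 1 − q1 = 1/2 − (w−c)/(2rα(ε))`,
`P(Q2 = c − rα(ε)) = 1 − q2 = 1/2 − (w'−c)/(2rα(ε))`, and consequently
`E[Q1] = w` and `E[Q2] = w'` (condition C4, unbiasedness). -/
theorem stmt5 (c r ε : ℝ) (hr : 0 < r) (hε : 0 < ε) (d : ℕ)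
    (w w' : ℝ) (hw : w ∈ Icc (c - r) (c + r)) (hw' : w' ∈ Icc (c - r) (c + r)) :
    (∑ z ∈ Finset.range (2 ^ d), ∑ u : Bool,
        ((2 : ℝ) ^ d)⁻¹ * (if u then pU1 c r ε d w else 1 - pU1 c r ε d w) *
          (if Q1val c r ε d w z u = c - r * alphaFn ε then 1 else 0)) = 1 - qOf c r ε w ∧
    1 - qOf c r ε w = 1 / 2 - (w - c) / (2 * r * alphaFn ε) ∧
    (∑ z ∈ Finset.range (2 ^ d), ∑ u' : Bool,
        ((2 : ℝ) ^ d)⁻¹ * (if u' then pU2 c r ε d w' else 1 - pU2 c r ε d w') *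
          (if Q2val c r ε d w' z u' = c - r * alphaFn ε then 1 else 0)) = 1 - qOf c r ε w' ∧
    1 - qOf c r ε w' = 1 / 2 - (w' - c) / (2 * r * alphaFn ε) ∧
    (∑ z ∈ Finset.range (2 ^ d), ∑ u : Bool,
        ((2 : ℝ) ^ d)⁻¹ * (if u then pU1 c r ε d w else 1 - pU1 c r ε d w) *
          Q1val c r ε d w z u) = w ∧
    (∑ z ∈ Finset.range (2 ^ d), ∑ u' : Bool,
        ((2 : ℝ) ^ d)⁻¹ * (if u' then pU2 c r ε d w' else 1 - pU2 c r ε d w') *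
          Q2val c r ε d w' z u') = w' := by
  have hα := alphaFn_gt_one hε
  have hα0 : 0 < alphaFn ε := by linarith
  have hrα : 0 < r * alphaFn ε := mul_pos hr hα0
  have hrαne : r * alphaFn ε ≠ 0 := ne_of_gt hrα
  have hNpos : (0:ℝ) < 2 ^ d := by positivity
  have hNne : ((2:ℝ) ^ d) ≠ 0 := ne_of_gt hNpos
  have hne : c + r * alphaFn ε ≠ c - r * alphaFn ε := by intro h; nlinarith
  -- q1 facts
  obtain ⟨hq0, hq1⟩ := qOf_bounds hr hε hw
  obtain ⟨hq0', hq1'⟩ := qOf_bounds hr hε hw'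
  -- T1 facts
  have hT1nn : 0 ≤ T1 c r ε d w := Int.floor_nonneg.mpr (by positivity)
  have hT1lt : T1 c r ε d w < ((2 ^ d : ℕ) : ℤ) := by
    rw [T1, Int.floor_lt]; push_cast; nlinarith
  obtain ⟨t, ht⟩ : ∃ t : ℕ, (t : ℤ) = T1 c r ε d w :=
    ⟨(T1 c r ε d w).toNat, Int.toNat_of_nonneg hT1nn⟩
  have htlt : t < 2 ^ d := by exact_mod_cast ht ▸ hT1lt
  have htR : ((t : ℕ) : ℝ) = ((T1 c r ε d w : ℤ) : ℝ) := by exact_mod_cast ht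
  have hp : pU1 c r ε d w = 2 ^ d * qOf c r ε w - t := by
    rw [pU1, show ⌊(2:ℝ) ^ d * qOf c r ε w⌋ = T1 c r ε d w from rfl, ← htR]
  -- T2 facts
  have hT2nn : 0 ≤ T2 c r ε d w' := Int.floor_nonneg.mpr (by nlinarith)
  have hT2lt : T2 c r ε d w' < ((2 ^ d : ℕ) : ℤ) := by
    rw [T2, Int.floor_lt]; push_cast; nlinarith
  obtain ⟨s, hs⟩ : ∃ s : ℕ, (s : ℤ) = T2 c r ε d w' :=
    ⟨(T2 c r ε d w').toNat, Int.toNat_of_nonneg hT2nn⟩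
  have hslt : s < 2 ^ d := by exact_mod_cast hs ▸ hT2lt
  have hsR : ((s : ℕ) : ℝ) = ((T2 c r ε d w' : ℤ) : ℝ) := by exact_mod_cast hs
  have hp2 : pU2 c r ε d w' = 2 ^ d * (1 - qOf c r ε w') - s := by
    rw [pU2, show ⌊(2:ℝ) ^ d * (1 - qOf c r ε w')⌋ = T2 c r ε d w' from rfl, ← hsR]
  -- condition conversions
  have hcond1 : ∀ z : ℕ, z < t → (z : ℤ) < T1 c r ε d w := fun z hz => by
    rw [← ht]; exact_mod_cast hz
  have hcond1' : ∀ z : ℕ, t < z → T1 c r ε d w < (z : ℤ) := fun z hz => by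
    rw [← ht]; exact_mod_cast hz
  have hceq1 : ¬ ((t : ℤ) < T1 c r ε d w) := by rw [← ht]; exact lt_irrefl _
  have hceq1' : ¬ (T1 c r ε d w < (t : ℤ)) := by rw [← ht]; exact lt_irrefl _
  have hcond2 : ∀ z : ℕ, z < s → (z : ℤ) < T2 c r ε d w' := fun z hz => by
    rw [← hs]; exact_mod_cast hz
  have hcond2' : ∀ z : ℕ, s < z → T2 c r ε d w' < (z : ℤ) := fun z hz => by
    rw [← hs]; exact_mod_cast hz
  have hceq2 : ¬ ((s : ℤ) < T2 c r ε d w') := by rw [← hs]; exact lt_irrefl _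
  have hceq2' : ¬ (T2 c r ε d w' < (s : ℤ)) := by rw [← hs]; exact lt_irrefl _
  have hsub1 : ((2 ^ d - (t + 1) : ℕ) : ℝ) = 2 ^ d - (t + 1) := by
    rw [Nat.cast_sub (by omega)]; push_cast; ring
  have hsub2 : ((2 ^ d - (s + 1) : ℕ) : ℝ) = 2 ^ d - (s + 1) := by
    rw [Nat.cast_sub (by omega)]; push_cast; ring
  refine ⟨?_, ?_, ?_, ?_, ?_, ?_⟩
  · rw [sum_tri (2 ^ d) t htlt _ 0 (((2:ℝ) ^ d)⁻¹ * (1 - pU1 c r ε d w)) (((2:ℝ) ^ d)⁻¹)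
      (fun z hz => by simp [Q1val, hcond1 z hz, hne])
      (by
        simp only [Q1val, if_neg hceq1, if_neg hceq1', Fintype.sum_bool, if_true,
          Bool.false_eq_true, if_false, one_mul]
        rw [if_neg hne, if_pos (show c + -1 * r * alphaFn ε = c - r * alphaFn ε by ring)]
        ring)
      (fun z hz => by
        simp only [Q1val, if_neg (asymm (hcond1' z hz)), if_pos (hcond1' z hz),
          Fintype.sum_bool, if_true, Bool.false_eq_true, if_false, if_pos rfl]
        ring)]
    rw [hsub1, hp]
    field_simp
    ring
  · rw [qOf]; ring
  · rw [sum_tri (2 ^ d) s hslt _ (((2:ℝ) ^ d)⁻¹) (((2:ℝ) ^ d)⁻¹ * pU2 c r ε d w') 0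
      (fun z hz => by
        simp only [Q2val, if_pos (hcond2 z hz), Fintype.sum_bool, if_true,
          Bool.false_eq_true, if_false, if_pos rfl]
        ring)
      (by
        simp only [Q2val, if_neg hceq2, if_neg hceq2', Fintype.sum_bool, if_true,
          Bool.false_eq_true, if_false, one_mul]
        rw [if_neg (show ¬ (c - -1 * r * alphaFn ε = c - r * alphaFn ε) by
            intro h; nlinarith)]
        ring)
      (fun z hz => by simp [Q2val, asymm (hcond2' z hz), hcond2' z hz, hne])]
    rw [hsub2, hp2]
    field_simp
    ring
  · rw [qOf]; ring
  · rw [sum_tri (2 ^ d) t htlt _ (((2:ℝ) ^ d)⁻¹ * (c + r * alphaFn ε))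
      (((2:ℝ) ^ d)⁻¹ * (pU1 c r ε d w * (c + r * alphaFn ε) +
        (1 - pU1 c r ε d w) * (c - r * alphaFn ε)))
      (((2:ℝ) ^ d)⁻¹ * (c - r * alphaFn ε))
      (fun z hz => by
        simp only [Q1val, if_pos (hcond1 z hz), Fintype.sum_bool, if_true,
          Bool.false_eq_true, if_false]
        ring)
      (by
        simp only [Q1val, if_neg hceq1, if_neg hceq1', Fintype.sum_bool, if_true,
          Bool.false_eq_true, if_false]
        ring)
      (fun z hz => by
        simp only [Q1val, if_neg (asymm (hcond1' z hz)), if_pos (hcond1' z hz),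
          Fintype.sum_bool, if_true, Bool.false_eq_true, if_false]
        ring)]
    rw [hsub1, hp, qOf]
    field_simp
    ring
  · rw [sum_tri (2 ^ d) s hslt _ (((2:ℝ) ^ d)⁻¹ * (c - r * alphaFn ε))
      (((2:ℝ) ^ d)⁻¹ * (pU2 c r ε d w' * (c - r * alphaFn ε) +
        (1 - pU2 c r ε d w') * (c + r * alphaFn ε)))
      (((2:ℝ) ^ d)⁻¹ * (c + r * alphaFn ε))
      (fun z hz => by
        simp only [Q2val, if_pos (hcond2 z hz), Fintype.sum_bool, if_true,
          Bool.false_eq_true, if_false]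
        ring)
      (by
        simp only [Q2val, if_neg hceq2, if_neg hceq2', Fintype.sum_bool, if_true,
          Bool.false_eq_true, if_false]
        ring)
      (fun z hz => by
        simp only [Q2val, if_neg (asymm (hcond2' z hz)), if_pos (hcond2' z hz),
          Fintype.sum_bool, if_true, Bool.false_eq_true, if_false]
        ring)]
    rw [hsub2, hp2, qOf]
    field_simp
    ring
end

section
/- For every d ∈ ℕ, the correlated stochastic quantizers satisfy ε-parameter-based local differential privacy (condition C5): for each component k ∈ {1, 2}, each output value v ∈ {c − r·α(ε), c + r·α(ε)}, and any two inputs u, u′ ∈ [c−r, c+r], the probability that Qk at input u equals v is at most e^ε times the probability that Qk at input u′ equals v. -/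
open Real Set Finset

/-- `P(Q1 = v)` when the first correlated quantizer is run on input `u`. -/
noncomputable def prob1 (c r ε : ℝ) (d : ℕ) (u v : ℝ) : ℝ :=
  ∑ z ∈ Finset.range (2 ^ d), ∑ b : Bool,
    ((2 : ℝ) ^ d)⁻¹ * (if b then pU1 c r ε d u else 1 - pU1 c r ε d u) *
      (if Q1val c r ε d u z b = v then 1 else 0)

/-- `P(Q2 = v)` when the second correlated quantizer is run on input `u`. -/
noncomputable def prob2 (c r ε : ℝ) (d : ℕ) (u v : ℝ) : ℝ :=
  ∑ z ∈ Finset.range (2 ^ d), ∑ b : Bool,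
    ((2 : ℝ) ^ d)⁻¹ * (if b then pU2 c r ε d u else 1 - pU2 c r ε d u) *
      (if Q2val c r ε d u z b = v then 1 else 0)

lemma sum_three (N : ℕ) (t : ℤ) (h0 : 0 ≤ t) (hN : t < (N:ℤ)) (a b p : ℝ) :
    ∑ z ∈ Finset.range N, (if (z:ℤ) < t then a else if t < (z:ℤ) then b else p)
      = t * a + ((N:ℝ) - 1 - t) * b + p := by
  obtain ⟨m, rfl⟩ : ∃ m : ℕ, t = (m:ℤ) := ⟨t.toNat, (Int.toNat_of_nonneg h0).symm⟩
  have hmN : m < N := by exact_mod_cast hN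
  have hterm : ∀ z ∈ Finset.range N, (if (z:ℤ) < (m:ℤ) then a else if (m:ℤ) < (z:ℤ) then b else p)
      = (if z < m then a else 0) + (if m < z then b else 0) + (if z = m then p else 0) := by
    intro z _
    simp only [Nat.cast_lt]
    rcases lt_trichotomy z m with h|h|h
    · simp [h, h.ne, lt_asymm h]
    · simp [h]
    · simp [h, h.ne', lt_asymm h]
  rw [Finset.sum_congr rfl hterm]
  rw [Finset.sum_add_distrib, Finset.sum_add_distrib]
  have h1 : ∑ z ∈ Finset.range N, (if z < m then a else 0) = m * a := by
    rw [← Finset.sum_filter]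
    have : (Finset.range N).filter (· < m) = Finset.range m := by
      ext z; simp; omega
    rw [this, Finset.sum_const, Finset.card_range, nsmul_eq_mul]
  have h2 : ∑ z ∈ Finset.range N, (if m < z then b else 0) = ((N:ℝ) - 1 - m) * b := by
    rw [← Finset.sum_filter]
    have : (Finset.range N).filter (m < ·) = Finset.Ico (m+1) N := by
      ext z; simp [Finset.mem_Ico]; omega
    rw [this, Finset.sum_const, Nat.card_Ico, nsmul_eq_mul]
    have : ((N - (m+1) : ℕ) : ℝ) = (N:ℝ) - 1 - m := by
      rw [Nat.cast_sub (by omega)]; push_cast; ring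
    rw [this]
  have h3 : ∑ z ∈ Finset.range N, (if z = m then p else 0) = p := by
    simp [Finset.sum_ite_eq' (Finset.range N) m, hmN]
  rw [h1, h2, h3]
  push_cast; ring

lemma floor_sum_plus (N : ℕ) (x : ℝ) (h0 : 0 ≤ x) (hN : x < (N:ℝ)) :
    ∑ z ∈ Finset.range N,
      (if (z:ℤ) < ⌊x⌋ then ((N:ℝ))⁻¹ else if ⌊x⌋ < (z:ℤ) then 0 else ((N:ℝ))⁻¹ * (x - ⌊x⌋))
      = x / N := by
  have hNpos : 0 < N := by
    by_contra h
    simp [Nat.eq_zero_of_not_pos h] at hN; linarith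
  have hT0 : 0 ≤ ⌊x⌋ := Int.floor_nonneg.mpr h0
  have hTN : ⌊x⌋ < (N:ℤ) := by
    apply Int.floor_lt.mpr; exact_mod_cast hN
  rw [sum_three N ⌊x⌋ hT0 hTN]
  have hNne : (N:ℝ) ≠ 0 := by positivity
  field_simp
  ring

lemma floor_sum_minus (N : ℕ) (x : ℝ) (h0 : 0 ≤ x) (hN : x < (N:ℝ)) :
    ∑ z ∈ Finset.range N,
      (if (z:ℤ) < ⌊x⌋ then 0 else if ⌊x⌋ < (z:ℤ) then ((N:ℝ))⁻¹ else ((N:ℝ))⁻¹ * (1 - (x - ⌊x⌋)))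
      = 1 - x / N := by
  have hNpos : 0 < N := by
    by_contra h
    simp [Nat.eq_zero_of_not_pos h] at hN; linarith
  have hT0 : 0 ≤ ⌊x⌋ := Int.floor_nonneg.mpr h0
  have hTN : ⌊x⌋ < (N:ℤ) := by
    apply Int.floor_lt.mpr; exact_mod_cast hN
  rw [sum_three N ⌊x⌋ hT0 hTN]
  have hNne : (N:ℝ) ≠ 0 := by positivity
  have hf := Int.fract_add_floor x
  field_simp
  linarith


section analytic
variable {c r ε u u' : ℝ}

lemma alpha_gt_one (hε : 0 < ε) : 1 < alphaFn ε := by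
  have hE : 1 < Real.exp ε := by
    rw [← Real.exp_zero]; exact Real.exp_lt_exp.mpr hε
  rw [alphaFn, lt_div_iff₀ (by linarith)]
  linarith

lemma q_mem (hr : 0 < r) (hε : 0 < ε) (hu : u ∈ Icc (c - r) (c + r)) :
    qOf c r ε u ∈ Icc ((alphaFn ε - 1) / (2 * alphaFn ε)) ((alphaFn ε + 1) / (2 * alphaFn ε)) := by
  obtain ⟨h1, h2⟩ := hu
  have hα := alpha_gt_one hε
  have hpos : 0 < 2 * r * alphaFn ε := by positivity
  constructor
  · have key : qOf c r ε u - (alphaFn ε - 1) / (2 * alphaFn ε) = (u - (c - r)) / (2 * r * alphaFn ε) := by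
      rw [qOf]; field_simp; ring
    have : 0 ≤ (u - (c - r)) / (2 * r * alphaFn ε) := by
      apply div_nonneg (by linarith) (le_of_lt hpos)
    linarith
  · have key : (alphaFn ε + 1) / (2 * alphaFn ε) - qOf c r ε u = ((c + r) - u) / (2 * r * alphaFn ε) := by
      rw [qOf]; field_simp; ring
    have : 0 ≤ ((c + r) - u) / (2 * r * alphaFn ε) := by
      apply div_nonneg (by linarith) (le_of_lt hpos)
    linarith

lemma ratio_bound (hε : 0 < ε) {x y : ℝ}
    (hx : x ∈ Icc ((alphaFn ε - 1) / (2 * alphaFn ε)) ((alphaFn ε + 1) / (2 * alphaFn ε)))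
    (hy : y ∈ Icc ((alphaFn ε - 1) / (2 * alphaFn ε)) ((alphaFn ε + 1) / (2 * alphaFn ε))) :
    x ≤ Real.exp ε * y := by
  have hα := alpha_gt_one hε
  have hE : 1 < Real.exp ε := by
    rw [← Real.exp_zero]; exact Real.exp_lt_exp.mpr hε
  have hid : Real.exp ε * ((alphaFn ε - 1) / (2 * alphaFn ε)) = (alphaFn ε + 1) / (2 * alphaFn ε) := by
    rw [alphaFn]
    have h1 : Real.exp ε - 1 ≠ 0 := by linarith
    have h2 : (Real.exp ε + 1) / (Real.exp ε - 1) ≠ 0 := by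
      apply div_ne_zero (by linarith) h1
    field_simp
    ring
  calc x ≤ (alphaFn ε + 1) / (2 * alphaFn ε) := hx.2
    _ = Real.exp ε * ((alphaFn ε - 1) / (2 * alphaFn ε)) := hid.symm
    _ ≤ Real.exp ε * y := by
        apply mul_le_mul_of_nonneg_left hy.1 (Real.exp_pos ε).le

lemma q_bounds (hr : 0 < r) (hε : 0 < ε) (hu : u ∈ Icc (c - r) (c + r)) :
    0 < qOf c r ε u ∧ qOf c r ε u < 1 := by
  have hα := alpha_gt_one hε
  obtain ⟨h1, h2⟩ := q_mem hr hε hu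
  have hl : 0 < (alphaFn ε - 1) / (2 * alphaFn ε) := div_pos (by linarith) (by linarith)
  have hh : (alphaFn ε + 1) / (2 * alphaFn ε) < 1 := by
    rw [div_lt_one (by positivity)]; linarith
  exact ⟨by linarith, by linarith⟩

lemma one_sub_q_mem (hr : 0 < r) (hε : 0 < ε) (hu : u ∈ Icc (c - r) (c + r)) :
    1 - qOf c r ε u ∈ Icc ((alphaFn ε - 1) / (2 * alphaFn ε)) ((alphaFn ε + 1) / (2 * alphaFn ε)) := by
  have hu' : 2 * c - u ∈ Icc (c - r) (c + r) := by
    obtain ⟨h1, h2⟩ := hu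
    constructor <;> [linarith; linarith]
  have h := q_mem hr hε hu'
  have : qOf c r ε (2 * c - u) = 1 - qOf c r ε u := by
    rw [qOf, qOf]
    have hα := alpha_gt_one hε
    field_simp
    ring
  rwa [this] at h

end analytic

section probs
variable (c r ε : ℝ) (d : ℕ) (u : ℝ)

lemma prob1_plus (hra : 0 < r * alphaFn ε)
    (hq0 : 0 ≤ qOf c r ε u) (hq1 : qOf c r ε u < 1) :
    prob1 c r ε d u (c + r * alphaFn ε) = qOf c r ε u := by
  have hcast : (((2:ℕ)^d : ℕ) : ℝ) = (2:ℝ)^d := by push_cast; ring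
  have hNpos : (0:ℝ) < (2:ℝ)^d := by positivity
  rw [prob1]
  have hterm : ∀ z ∈ Finset.range (2^d),
      (∑ b : Bool, ((2:ℝ)^d)⁻¹ * (if b then pU1 c r ε d u else 1 - pU1 c r ε d u) *
        (if Q1val c r ε d u z b = c + r * alphaFn ε then 1 else 0))
      = (if (z:ℤ) < ⌊(2:ℝ)^d * qOf c r ε u⌋ then ((2:ℝ)^d)⁻¹
         else if ⌊(2:ℝ)^d * qOf c r ε u⌋ < (z:ℤ) then 0
         else ((2:ℝ)^d)⁻¹ * ((2:ℝ)^d * qOf c r ε u - ⌊(2:ℝ)^d * qOf c r ε u⌋)) := by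
    intro z _
    rw [Fintype.sum_bool]
    have hT : T1 c r ε d u = ⌊(2:ℝ)^d * qOf c r ε u⌋ := rfl
    have hp : pU1 c r ε d u = (2:ℝ)^d * qOf c r ε u - ⌊(2:ℝ)^d * qOf c r ε u⌋ := rfl
    rw [← hp, ← hT]
    rcases lt_trichotomy ((z:ℤ)) (T1 c r ε d u) with h|h|h
    · rw [if_pos h]
      simp only [Q1val, if_pos h]
      simp; ring
    · have h1 : ¬ ((z:ℤ) < T1 c r ε d u) := by omega
      have h2 : ¬ (T1 c r ε d u < (z:ℤ)) := by omega
      have e1 : c + (1:ℝ) * r * alphaFn ε = c + r * alphaFn ε := by ring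
      have e2 : ¬ (c + (-1:ℝ) * r * alphaFn ε = c + r * alphaFn ε) := by
        intro hh; nlinarith
      rw [if_neg h1, if_neg h2]
      have e2' : ¬ (-(r * alphaFn ε) = r * alphaFn ε) := by intro hh; nlinarith
      simp only [Q1val, if_neg h1, if_neg h2]
      simp [e1, e2, e2']
    · have h1 : ¬ ((z:ℤ) < T1 c r ε d u) := by omega
      have e3 : ¬ (c - r * alphaFn ε = c + r * alphaFn ε) := by intro hh; linarith
      rw [if_neg h1, if_pos h]
      simp only [Q1val, if_neg h1, if_pos h]
      simp [e3]
  rw [Finset.sum_congr rfl hterm]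
  rw [show ((2:ℝ)^d) = ((2^d : ℕ):ℝ) from hcast.symm]
  rw [floor_sum_plus (2^d) _ (by rw [hcast]; positivity)
      (by rw [hcast]; nlinarith)]
  rw [hcast]
  field_simp

lemma prob1_minus (hra : 0 < r * alphaFn ε)
    (hq0 : 0 ≤ qOf c r ε u) (hq1 : qOf c r ε u < 1) :
    prob1 c r ε d u (c - r * alphaFn ε) = 1 - qOf c r ε u := by
  have hcast : (((2:ℕ)^d : ℕ) : ℝ) = (2:ℝ)^d := by push_cast; ring
  have hNpos : (0:ℝ) < (2:ℝ)^d := by positivity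
  rw [prob1]
  have hterm : ∀ z ∈ Finset.range (2^d),
      (∑ b : Bool, ((2:ℝ)^d)⁻¹ * (if b then pU1 c r ε d u else 1 - pU1 c r ε d u) *
        (if Q1val c r ε d u z b = c - r * alphaFn ε then 1 else 0))
      = (if (z:ℤ) < ⌊(2:ℝ)^d * qOf c r ε u⌋ then 0
         else if ⌊(2:ℝ)^d * qOf c r ε u⌋ < (z:ℤ) then ((2:ℝ)^d)⁻¹
         else ((2:ℝ)^d)⁻¹ * (1 - ((2:ℝ)^d * qOf c r ε u - ⌊(2:ℝ)^d * qOf c r ε u⌋))) := by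
    intro z _
    rw [Fintype.sum_bool]
    have hp : pU1 c r ε d u = (2:ℝ)^d * qOf c r ε u - ⌊(2:ℝ)^d * qOf c r ε u⌋ := rfl
    have hT : T1 c r ε d u = ⌊(2:ℝ)^d * qOf c r ε u⌋ := rfl
    rw [← hp, ← hT]
    have e3 : ¬ (c + r * alphaFn ε = c - r * alphaFn ε) := by intro hh; linarith
    rcases lt_trichotomy ((z:ℤ)) (T1 c r ε d u) with h|h|h
    · rw [if_pos h]
      simp only [Q1val, if_pos h]
      simp [e3]
    · have h1 : ¬ ((z:ℤ) < T1 c r ε d u) := by omega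
      have h2 : ¬ (T1 c r ε d u < (z:ℤ)) := by omega
      have e1 : ¬ (c + (1:ℝ) * r * alphaFn ε = c - r * alphaFn ε) := by intro hh; nlinarith
      have e1' : ¬ (r * alphaFn ε = -(r * alphaFn ε)) := by intro hh; nlinarith
      have e2 : c + (-1:ℝ) * r * alphaFn ε = c - r * alphaFn ε := by ring
      have e2' : -(r * alphaFn ε) = -(r * alphaFn ε) := rfl
      rw [if_neg h1, if_neg h2]
      simp only [Q1val, if_neg h1, if_neg h2]
      simp [e1, e1', e2, e3]
      try ring
      try (intro hh; exact absurd trivial hh)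
    · have h1 : ¬ ((z:ℤ) < T1 c r ε d u) := by omega
      rw [if_neg h1, if_pos h]
      simp only [Q1val, if_neg h1, if_pos h]
      simp; ring
  rw [Finset.sum_congr rfl hterm]
  rw [show ((2:ℝ)^d) = ((2^d : ℕ):ℝ) from hcast.symm]
  rw [floor_sum_minus (2^d) _ (by rw [hcast]; positivity)
      (by rw [hcast]; nlinarith)]
  rw [hcast]
  field_simp

lemma prob2_minus (hra : 0 < r * alphaFn ε)
    (hq0 : 0 ≤ 1 - qOf c r ε u) (hq1 : 1 - qOf c r ε u < 1) :
    prob2 c r ε d u (c - r * alphaFn ε) = 1 - qOf c r ε u := by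
  have hcast : (((2:ℕ)^d : ℕ) : ℝ) = (2:ℝ)^d := by push_cast; ring
  have hNpos : (0:ℝ) < (2:ℝ)^d := by positivity
  rw [prob2]
  have hterm : ∀ z ∈ Finset.range (2^d),
      (∑ b : Bool, ((2:ℝ)^d)⁻¹ * (if b then pU2 c r ε d u else 1 - pU2 c r ε d u) *
        (if Q2val c r ε d u z b = c - r * alphaFn ε then 1 else 0))
      = (if (z:ℤ) < ⌊(2:ℝ)^d * (1 - qOf c r ε u)⌋ then ((2:ℝ)^d)⁻¹
         else if ⌊(2:ℝ)^d * (1 - qOf c r ε u)⌋ < (z:ℤ) then 0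
         else ((2:ℝ)^d)⁻¹ * ((2:ℝ)^d * (1 - qOf c r ε u) - ⌊(2:ℝ)^d * (1 - qOf c r ε u)⌋)) := by
    intro z _
    rw [Fintype.sum_bool]
    have hp : pU2 c r ε d u = (2:ℝ)^d * (1 - qOf c r ε u) - ⌊(2:ℝ)^d * (1 - qOf c r ε u)⌋ := rfl
    have hT : T2 c r ε d u = ⌊(2:ℝ)^d * (1 - qOf c r ε u)⌋ := rfl
    rw [← hp, ← hT]
    have e3 : ¬ (c + r * alphaFn ε = c - r * alphaFn ε) := by intro hh; linarith
    rcases lt_trichotomy ((z:ℤ)) (T2 c r ε d u) with h|h|h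
    · rw [if_pos h]
      simp only [Q2val, if_pos h]
      simp; ring
    · have h1 : ¬ ((z:ℤ) < T2 c r ε d u) := by omega
      have h2 : ¬ (T2 c r ε d u < (z:ℤ)) := by omega
      have e1 : c - (1:ℝ) * r * alphaFn ε = c - r * alphaFn ε := by ring
      have e2 : ¬ (c - (-1:ℝ) * r * alphaFn ε = c - r * alphaFn ε) := by intro hh; nlinarith
      have e2' : ¬ (-(r * alphaFn ε) = r * alphaFn ε) := by intro hh; nlinarith
      rw [if_neg h1, if_neg h2]
      simp only [Q2val, if_neg h1, if_neg h2]
      simp [e1, e2, e2', e3]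
    · have h1 : ¬ ((z:ℤ) < T2 c r ε d u) := by omega
      rw [if_neg h1, if_pos h]
      simp only [Q2val, if_neg h1, if_pos h]
      simp [e3]
  rw [Finset.sum_congr rfl hterm]
  rw [show ((2:ℝ)^d) = ((2^d : ℕ):ℝ) from hcast.symm]
  rw [floor_sum_plus (2^d) _ (by rw [hcast]; positivity)
      (by rw [hcast]; nlinarith)]
  rw [hcast]
  field_simp

lemma prob2_plus (hra : 0 < r * alphaFn ε)
    (hq0 : 0 ≤ 1 - qOf c r ε u) (hq1 : 1 - qOf c r ε u < 1) :
    prob2 c r ε d u (c + r * alphaFn ε) = qOf c r ε u := by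
  have hcast : (((2:ℕ)^d : ℕ) : ℝ) = (2:ℝ)^d := by push_cast; ring
  have hNpos : (0:ℝ) < (2:ℝ)^d := by positivity
  rw [prob2]
  have hterm : ∀ z ∈ Finset.range (2^d),
      (∑ b : Bool, ((2:ℝ)^d)⁻¹ * (if b then pU2 c r ε d u else 1 - pU2 c r ε d u) *
        (if Q2val c r ε d u z b = c + r * alphaFn ε then 1 else 0))
      = (if (z:ℤ) < ⌊(2:ℝ)^d * (1 - qOf c r ε u)⌋ then 0
         else if ⌊(2:ℝ)^d * (1 - qOf c r ε u)⌋ < (z:ℤ) then ((2:ℝ)^d)⁻¹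
         else ((2:ℝ)^d)⁻¹ * (1 - ((2:ℝ)^d * (1 - qOf c r ε u) - ⌊(2:ℝ)^d * (1 - qOf c r ε u)⌋))) := by
    intro z _
    rw [Fintype.sum_bool]
    have hp : pU2 c r ε d u = (2:ℝ)^d * (1 - qOf c r ε u) - ⌊(2:ℝ)^d * (1 - qOf c r ε u)⌋ := rfl
    have hT : T2 c r ε d u = ⌊(2:ℝ)^d * (1 - qOf c r ε u)⌋ := rfl
    rw [← hp, ← hT]
    have e3 : ¬ (c - r * alphaFn ε = c + r * alphaFn ε) := by intro hh; linarith
    rcases lt_trichotomy ((z:ℤ)) (T2 c r ε d u) with h|h|h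
    · rw [if_pos h]
      simp only [Q2val, if_pos h]
      simp [e3]
    · have h1 : ¬ ((z:ℤ) < T2 c r ε d u) := by omega
      have h2 : ¬ (T2 c r ε d u < (z:ℤ)) := by omega
      have e1 : ¬ (c - (1:ℝ) * r * alphaFn ε = c + r * alphaFn ε) := by intro hh; nlinarith
      have e1' : ¬ (r * alphaFn ε = -(r * alphaFn ε)) := by intro hh; nlinarith
      have e2 : c - (-1:ℝ) * r * alphaFn ε = c + r * alphaFn ε := by ring
      rw [if_neg h1, if_neg h2]
      simp only [Q2val, if_neg h1, if_neg h2]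
      simp [e1, e1', e2, e3]
      try ring
      try (intro hh; exact absurd trivial hh)
    · have h1 : ¬ ((z:ℤ) < T2 c r ε d u) := by omega
      rw [if_neg h1, if_pos h]
      simp only [Q2val, if_neg h1, if_pos h]
      simp; ring
  rw [Finset.sum_congr rfl hterm]
  rw [show ((2:ℝ)^d) = ((2^d : ℕ):ℝ) from hcast.symm]
  rw [floor_sum_minus (2^d) _ (by rw [hcast]; positivity)
      (by rw [hcast]; nlinarith)]
  rw [hcast]
  have : (2:ℝ)^d ≠ 0 := by positivity
  field_simp
  try ring

end probs


/-- for every `d ∈ ℕ`, the correlated stochastic quantizers satisfy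
`ε`-parameter-based local differential privacy (condition C5): for each component,
each output value `v ∈ {c − rα(ε), c + rα(ε)}`, and any inputs `u, u' ∈ [c−r, c+r]`,
the probability of outputting `v` on input `u` is at most `e^ε` times that on input `u'`. -/
theorem stmt6 (c r ε : ℝ) (hr : 0 < r) (hε : 0 < ε) (d : ℕ) :
    ∀ u ∈ Icc (c - r) (c + r), ∀ u' ∈ Icc (c - r) (c + r),
      ∀ v ∈ ({c - r * alphaFn ε, c + r * alphaFn ε} : Set ℝ),
        prob1 c r ε d u v ≤ Real.exp ε * prob1 c r ε d u' v ∧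
        prob2 c r ε d u v ≤ Real.exp ε * prob2 c r ε d u' v := by
  intro u hu u' hu' v hv
  have hα := alpha_gt_one hε
  have hra : 0 < r * alphaFn ε := mul_pos hr (by linarith)
  have hq := q_bounds hr hε hu
  have hq' := q_bounds hr hε hu'
  have hm := q_mem hr hε hu
  have hm' := q_mem hr hε hu'
  have hs := one_sub_q_mem hr hε hu
  have hs' := one_sub_q_mem hr hε hu'
  simp only [Set.mem_insert_iff, Set.mem_singleton_iff] at hv
  rcases hv with hv | hv
  · subst hv
    rw [prob1_minus c r ε d u hra hq.1.le hq.2,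
        prob1_minus c r ε d u' hra hq'.1.le hq'.2,
        prob2_minus c r ε d u hra (by linarith [hq.2]) (by linarith [hq.1]),
        prob2_minus c r ε d u' hra (by linarith [hq'.2]) (by linarith [hq'.1])]
    exact ⟨ratio_bound hε hs hs', ratio_bound hε hs hs'⟩
  · subst hv
    rw [prob1_plus c r ε d u hra hq.1.le hq.2,
        prob1_plus c r ε d u' hra hq'.1.le hq'.2,
        prob2_plus c r ε d u hra (by linarith [hq.2]) (by linarith [hq.1]),
        prob2_plus c r ε d u' hra (by linarith [hq'.2]) (by linarith [hq'.1])]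
    exact ⟨ratio_bound hε hm hm', ratio_bound hε hm hm'⟩
end
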